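/- Let 0 < a < b. Then sup over θ ∈ (0,∞) of (exp(−a/θ) − exp(−b/θ)) equals (b/a)^{−a/(b−a)} − (b/a)^{−b/(b−a)}. -/

import Mathlib

open Real Set

lemma key_ineq {p s l : ℝ} (hp : 0 < p) (hs0 : 0 < s) (hs1 : s < 1)
    (hl : l = p / (p + 1)) :
    s ^ p * (1 - s) ≤ l ^ p * (1 - l) := by
  have hp1 : (0:ℝ) < p + 1 := by linarith
  have hl0 : 0 < l := by rw [hl]; positivity
  have hl1 : l < 1 := by rw [hl]; rw [div_lt_one hp1]; linarith
  have h1s : (0:ℝ) < 1 - s := by linarith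
  have h1l : (0:ℝ) < 1 - l := by linarith
  have hgm := Real.geom_mean_le_arith_mean2_weighted (w₁ := l) (w₂ := 1 - l)
    (p₁ := s / l) (p₂ := (1 - s) / (1 - l)) hl0.le h1l.le
    (by positivity) (by positivity) (by ring)
  have hsum : l * (s / l) + (1 - l) * ((1 - s) / (1 - l)) = 1 := by
    field_simp; ring
  rw [hsum] at hgm
  have hpow := Real.rpow_le_one (by positivity) hgm hp1.le
  rw [Real.mul_rpow (by positivity) (by positivity)] at hpow
  -- rewrite ((s/l)^l)^(p+1) = (s/l)^p etc.
  have e1 : ((s / l) ^ l) ^ (p + 1) = (s / l) ^ p := by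
    rw [← Real.rpow_mul (by positivity)]
    congr 1
    rw [hl]; field_simp
  have e2 : (((1 - s) / (1 - l)) ^ (1 - l)) ^ (p + 1) = (1 - s) / (1 - l) := by
    rw [← Real.rpow_mul (by positivity)]
    have : (1 - l) * (p + 1) = 1 := by rw [hl]; field_simp; ring
    rw [this, Real.rpow_one]
  rw [e1, e2, Real.div_rpow hs0.le hl0.le, div_mul_div_comm] at hpow
  have hd : (0:ℝ) < l ^ p * (1 - l) := by positivity
  calc s ^ p * (1 - s) = (s ^ p * (1 - s)) / (l ^ p * (1 - l)) * (l ^ p * (1 - l)) := by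
        field_simp
    _ ≤ 1 * (l ^ p * (1 - l)) := by
        apply mul_le_mul_of_nonneg_right _ hd.le
        exact hpow
    _ = l ^ p * (1 - l) := one_mul _
/-- For `0 < a < b`, the supremum over `θ ∈ (0,∞)` of
`exp(-a/θ) - exp(-b/θ)` equals `(b/a)^(-a/(b-a)) - (b/a)^(-b/(b-a))`
(the maximum tuning probability of the life-permitting interval `[a,b]`
over the family of exponential priors). -/
theorem exp_interval_prob_sup
    (a b : ℝ) (ha : 0 < a) (hab : a < b) :
    (⨆ θ : Ioi (0:ℝ), (Real.exp (-a / θ) - Real.exp (-b / θ))) =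
      (b / a) ^ (-a / (b - a)) - (b / a) ^ (-b / (b - a)) := by
  have hba : (0:ℝ) < b - a := by linarith
  have hb : (0:ℝ) < b := by linarith
  set p : ℝ := a / (b - a) with hpdef
  have hp : 0 < p := by positivity
  set l : ℝ := a / b with hldef
  have hl : l = p / (p + 1) := by
    rw [hldef, hpdef]; field_simp; ring
  have hl0 : 0 < l := by positivity
  have hl1 : l < 1 := by rw [hldef, div_lt_one hb]; exact hab
  -- rewrite the RHS
  have hrhs : (b / a) ^ (-a / (b - a)) - (b / a) ^ (-b / (b - a)) = l ^ p * (1 - l) := by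
    have h1 : (b / a) ^ (-a / (b - a)) = l ^ p := by
      rw [neg_div, Real.rpow_neg (by positivity), ← Real.inv_rpow (by positivity),
        hldef, hpdef, inv_div]
    have hbb : b / (b - a) = p + 1 := by rw [hpdef]; field_simp; ring
    have h2 : (b / a) ^ (-b / (b - a)) = l ^ p * l := by
      rw [neg_div, Real.rpow_neg (by positivity), ← Real.inv_rpow (by positivity),
        hldef, inv_div, hbb, Real.rpow_add (by positivity), Real.rpow_one]
    rw [h1, h2]; ring
  -- the value at each θ
  have hval : ∀ θ : ℝ, 0 < θ →
      Real.exp (-a / θ) - Real.exp (-b / θ)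
        = (Real.exp (-(b - a) / θ)) ^ p * (1 - Real.exp (-(b - a) / θ)) := by
    intro θ hθ
    have hs0 : 0 < Real.exp (-(b - a) / θ) := Real.exp_pos _
    have e1 : Real.exp (-(b - a) / θ) ^ p = Real.exp (-a / θ) := by
      rw [Real.rpow_def_of_pos (Real.exp_pos _), Real.log_exp, hpdef]
      congr 1
      field_simp
    have e2 : Real.exp (-(b - a) / θ) ^ (p + 1) = Real.exp (-b / θ) := by
      rw [Real.rpow_def_of_pos (Real.exp_pos _), Real.log_exp, hpdef]
      congr 1
      field_simp
      ring
    rw [← e1, ← e2, Real.rpow_add hs0, Real.rpow_one]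
    ring
  have hbound : ∀ θ : Ioi (0:ℝ),
      Real.exp (-a / θ) - Real.exp (-b / θ) ≤ l ^ p * (1 - l) := by
    rintro ⟨θ, hθ⟩
    have hθ' : (0:ℝ) < θ := hθ
    rw [hval θ hθ']
    apply key_ineq hp (Real.exp_pos _) _ hl
    rw [← Real.exp_zero]
    apply Real.exp_lt_exp.2
    have : 0 < (b - a) / θ := by positivity
    rw [neg_div]; linarith
  rw [hrhs]
  apply le_antisymm
  · exact ciSup_le hbound
  · -- achieved at θ* = (b-a)/log(b/a)
    have hlog : 0 < Real.log (b / a) := Real.log_pos (by rw [lt_div_iff₀ ha]; linarith)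
    set θs : ℝ := (b - a) / Real.log (b / a) with hθs
    have hθs0 : 0 < θs := by positivity
    have hsval : Real.exp (-(b - a) / θs) = l := by
      rw [hθs, neg_div, div_div_eq_mul_div, mul_comm, mul_div_assoc,
        div_self (ne_of_gt hba), mul_one, Real.exp_neg, Real.exp_log (by positivity),
        hldef, inv_div]
    have hach : Real.exp (-a / θs) - Real.exp (-b / θs) = l ^ p * (1 - l) := by
      rw [hval θs hθs0, hsval]
    have hbdd : BddAbove (Set.range fun θ : Ioi (0:ℝ) =>
        Real.exp (-a / θ) - Real.exp (-b / θ)) := by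
      refine ⟨l ^ p * (1 - l), ?_⟩
      rintro x ⟨θ, rfl⟩
      exact hbound θ
    calc l ^ p * (1 - l) = Real.exp (-a / (⟨θs, hθs0⟩ : Ioi (0:ℝ))) -
          Real.exp (-b / (⟨θs, hθs0⟩ : Ioi (0:ℝ))) := hach.symm
      _ ≤ _ := le_ciSup hbdd _
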